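/- Let U ⊆ E_{n,k} with fixed restricted instance I_U (with Pr_{D*}[x_V, I_U] > 0), and let (μ*|_U)^∧(α,β,γ) denote the Fourier coefficients of the conditioned planted density with respect to the bases χ_α, φ_β, ψ_γ on the coordinates x ∈ {-1,1}^n and the instance coordinates outside U. For all α ⊆ [n], β ⊆ E_{n,k}\U and γ with γ̄ ⊆ E_{n,k}\U: if γ ⊢ α, r(γ) ≥ t and β ⊆ γ̄, then |(μ*|_U)^∧(α,β,γ)| ≤ √(pq)^{|γ̄ ∩ β|} · p^{|γ̄ \ β|}; and if any of these conditions fails (or β or γ̄ meets U), then (μ*|_U)^∧(α,β,γ) = 0. -/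

import Mathlib

open Finset Matrix
open scoped BigOperators Classical

noncomputable section

namespace RandomCSP

/-- Scopes: `k`-tuples of distinct indices in `[n]`, i.e. injective maps `Fin k → Fin n`. -/
abbrev Scope (n k : ℕ) := {S : Fin k → Fin n // Function.Injective S}

/-- An instance of a CSP: for each scope an inclusion bit (`true` encodes `y_S = -1`,
i.e. the constraint on scope `S` is included) and a tuple of negation bits
(`true` encodes `-1`). -/
abbrev Inst (n k : ℕ) := (Scope n k → Bool) × (Scope n k → Fin k → Bool)

/-- Assignments to the `n` variables (`true` encodes `-1`). -/
abbrev Assign (n : ℕ) := Fin n → Bool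

/-- Sign encoding: `true ↦ -1`, `false ↦ 1`. -/
def sgn (b : Bool) : ℝ := if b then -1 else 1

/-- The bits of the tuple `b_S ∘ x_S` (the product of signs is the xor of the bits). -/
def litBits (n k : ℕ) (x : Assign n) (I : Inst n k) (S : Scope n k) : Fin k → Bool :=
  fun j => xor (I.2 S j) (x (S.1 j))

/-- Probability mass of an instance under the distribution `D(p)`: each scope is included
independently with probability `p` and all negation bits are independent uniform bits. -/
def dpMass (n k : ℕ) (p : ℝ) (I : Inst n k) : ℝ :=
  (∏ S : Scope n k, if I.1 S then p else 1 - p) * (1 / 2) ^ (Fintype.card (Scope n k) * k)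

/-- Background mass on pairs (assignment, instance): uniform × `D(p)`. -/
def bgMass (n k : ℕ) (p : ℝ) (w : Assign n × Inst n k) : ℝ :=
  (1 / 2) ^ n * dpMass n k p w.2

/-- Probability mass of the planted distribution `D*` determined by a density `ηP` on
`{-1,1}^k`: `x` is uniform, each scope is included independently with probability `p`;
on included scopes `b_S = z_S ∘ x_S` with `z_S ∼ ηP`, on excluded scopes `b_S` is uniform. -/
def plantedMass (n k : ℕ) (p : ℝ) (ηP : (Fin k → Bool) → ℝ) (w : Assign n × Inst n k) : ℝ :=
  (1 / 2) ^ n * ∏ S : Scope n k,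
    (if w.2.1 S then p * (ηP (litBits n k w.1 w.2 S) * (1 / 2) ^ k)
     else (1 - p) * (1 / 2) ^ k)

/-- The planted density `μ*` relative to uniform × `D(p)`. -/
def muStar (n k : ℕ) (p : ℝ) (ηP : (Fin k → Bool) → ℝ) (w : Assign n × Inst n k) : ℝ :=
  plantedMass n k p ηP w / bgMass n k p w

/-- `P` supports a `(t-1)`-wise uniform distribution on satisfying assignments, with
density `ηP` relative to the uniform distribution on `{-1,1}^k`. -/
def SupportsUniform (k t : ℕ) (P : (Fin k → Bool) → Bool) (ηP : (Fin k → Bool) → ℝ) : Prop :=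
  (∀ z, 0 ≤ ηP z) ∧
  ((1 / 2 : ℝ) ^ k * ∑ z : Fin k → Bool, ηP z) = 1 ∧
  (∀ z, ηP z ≠ 0 → P z = true) ∧
  ∀ T : Finset (Fin k), T.card = t - 1 → ∀ a : Fin k → Bool,
    ((1 / 2 : ℝ) ^ k * ∑ z : Fin k → Bool, if ∀ j ∈ T, z j = a j then ηP z else 0)
      = (1 / 2 : ℝ) ^ (t - 1)

/-- The objective value `F(x,y,b) = Σ_S 1(y_S = -1)·P(b_S ∘ x_S)`. -/
def objVal (n k : ℕ) (P : (Fin k → Bool) → Bool) (x : Assign n) (I : Inst n k) : ℝ :=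
  ∑ S : Scope n k, if I.1 S = true ∧ P (litBits n k x I S) = true then 1 else 0

/-- Parity character `χ_α`. -/
def chiF (n : ℕ) (α : Finset (Fin n)) (x : Assign n) : ℝ := ∏ i ∈ α, sgn (x i)

/-- The `p`-biased single coordinate character: `φ(-1) = -√(q/p)`, `φ(1) = √(p/q)`. -/
def phiY (p : ℝ) (v : Bool) : ℝ :=
  if v then -Real.sqrt ((1 - p) / p) else Real.sqrt (p / (1 - p))

/-- The `p`-biased character `φ_β` on the inclusion bits. -/
def phiF (n k : ℕ) (p : ℝ) (β : Finset (Scope n k)) (y : Scope n k → Bool) : ℝ :=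
  ∏ S ∈ β, phiY p (y S)

/-- The character `ψ_γ` on the negation bits. -/
def psiF (n k : ℕ) (γ : Finset (Scope n k × Fin k)) (b : Scope n k → Fin k → Bool) : ℝ :=
  ∏ e ∈ γ, sgn (b e.1 e.2)

/-- `γ̄`: the set of scopes present in `γ`. -/
def scopesOf (n k : ℕ) (γ : Finset (Scope n k × Fin k)) : Finset (Scope n k) :=
  γ.image Prod.fst

/-- The Fourier coefficient `f̂(α,β,γ)` of a function on pairs (assignment, instance),
with respect to the background measure uniform × `D(p)`. -/
def fhat (n k : ℕ) (p : ℝ) (f : Assign n × Inst n k → ℝ)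
    (α : Finset (Fin n)) (β : Finset (Scope n k)) (γ : Finset (Scope n k × Fin k)) : ℝ :=
  ∑ w : Assign n × Inst n k,
    bgMass n k p w * f w * chiF n α w.1 * phiF n k p β w.2.1 * psiF n k γ w.2.2

/-- The Fourier coefficient of the planted density:
`μ̂*(α,β,γ) = E_{(x,y,b) ∼ D*}[χ_α(x) φ_β(y) ψ_γ(b)]`. -/
def muHat (n k : ℕ) (p : ℝ) (ηP : (Fin k → Bool) → ℝ)
    (α : Finset (Fin n)) (β : Finset (Scope n k)) (γ : Finset (Scope n k × Fin k)) : ℝ :=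
  ∑ w : Assign n × Inst n k,
    plantedMass n k p ηP w * chiF n α w.1 * phiF n k p β w.2.1 * psiF n k γ w.2.2

/-- The low-degree projection `L_d`, keeping exactly the Fourier terms `χ_α φ_β ψ_γ`
with `|α| ≤ d_x` and `|β ∪ γ̄| ≤ d_I`. -/
def Ld (n k : ℕ) (p : ℝ) (dx dI : ℕ) (f : Assign n × Inst n k → ℝ) :
    Assign n × Inst n k → ℝ :=
  fun w => ∑ α : Finset (Fin n), ∑ β : Finset (Scope n k), ∑ γ : Finset (Scope n k × Fin k),
    if α.card ≤ dx ∧ (β ∪ scopesOf n k γ).card ≤ dI then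
      fhat n k p f α β γ * chiF n α w.1 * phiF n k p β w.2.1 * psiF n k γ w.2.2
    else 0

/-- Override the coordinates of `I` on the scopes in `U` by those of `J`. -/
def override (n k : ℕ) (U : Finset (Scope n k)) (J I : Inst n k) : Inst n k :=
  (fun S => if S ∈ U then J.1 S else I.1 S,
   fun S j => if S ∈ U then J.2 S j else I.2 S j)

/-- The restriction `R_U f`: fix the instance coordinates on the scopes in `U`
to the restricted instance given by `J`. -/
def restrictU (n k : ℕ) (U : Finset (Scope n k)) (J : Inst n k)
    (f : Assign n × Inst n k → ℝ) : Assign n × Inst n k → ℝ :=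
  fun w => f (w.1, override n k U J w.2)

/-- `V(U)`: the set of variable indices appearing in the scopes of `U`. -/
def varsOf (n k : ℕ) (U : Finset (Scope n k)) : Finset (Fin n) :=
  U.biUnion fun S => Finset.image S.1 Finset.univ

/-- Agreement of `w'` with `w` on a block of variables `V` and scopes `U`. -/
def agreeOn (n k : ℕ) (V : Finset (Fin n)) (U : Finset (Scope n k))
    (w' w : Assign n × Inst n k) : Prop :=
  (∀ i ∈ V, w'.1 i = w.1 i) ∧
  ∀ S ∈ U, w'.2.1 S = w.2.1 S ∧ ∀ j, w'.2.2 S j = w.2.2 S j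

/-- Marginal probability under the mass function `μ` of agreeing with `w` on `(V, U)`. -/
def marg (n k : ℕ) (μ : Assign n × Inst n k → ℝ)
    (V : Finset (Fin n)) (U : Finset (Scope n k)) (w : Assign n × Inst n k) : ℝ :=
  ∑ w' : Assign n × Inst n k, if agreeOn n k V U w' w then μ w' else 0

/-- `π_U(x_V, I_U) = Pr_{D*}[x_V, I_U] / Pr_{uniform×D(p)}[x_V, I_U]`. -/
def piU (n k : ℕ) (p : ℝ) (ηP : (Fin k → Bool) → ℝ) (U : Finset (Scope n k))
    (w : Assign n × Inst n k) : ℝ :=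
  marg n k (plantedMass n k p ηP) (varsOf n k U) U w /
    marg n k (bgMass n k p) (varsOf n k U) U w

/-- The conditioned planted density `μ*|_U(x, I_{Uᶜ}) =
Pr_{D*}[x_{Vᶜ}, I_{Uᶜ} | x_V, I_U] / Pr_{D(p)}[x_{Vᶜ}, I_{Uᶜ}]`, viewed as a function of
all of `x` and of the instance coordinates outside `U` (fixed to `J` on `U`). -/
def condMu (n k : ℕ) (p : ℝ) (ηP : (Fin k → Bool) → ℝ) (U : Finset (Scope n k)) (J : Inst n k)
    (w : Assign n × Inst n k) : ℝ :=
  (plantedMass n k p ηP (w.1, override n k U J w.2) /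
      marg n k (plantedMass n k p ηP) (varsOf n k U) U (w.1, J)) /
    marg n k (bgMass n k p) (varsOf n k U)ᶜ Uᶜ (w.1, override n k U J w.2)

/-- Fourier coefficients of the conditioned planted density. -/
def condMuHat (n k : ℕ) (p : ℝ) (ηP : (Fin k → Bool) → ℝ)
    (U : Finset (Scope n k)) (J : Inst n k)
    (α : Finset (Fin n)) (β : Finset (Scope n k)) (γ : Finset (Scope n k × Fin k)) : ℝ :=
  fhat n k p (condMu n k p ηP U J) α β γ

/-- `γ ⊢ α`: every index of `α` appears an odd number of times as some `S_j` with
`(S,j) ∈ γ`, and every other index appears an even number of times. -/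
def derives (n k : ℕ) (γ : Finset (Scope n k × Fin k)) (α : Finset (Fin n)) : Prop :=
  ∀ i : Fin n, i ∈ α ↔ Odd (γ.filter fun e => e.1.1 e.2 = i).card

/-- `r(γ) ≥ t`: every scope present in `γ` contributes at least `t` coordinates. -/
def arityGE (n k : ℕ) (γ : Finset (Scope n k × Fin k)) (t : ℕ) : Prop :=
  ∀ S ∈ scopesOf n k γ, t ≤ (γ.filter fun e => e.1 = S).card

/-- `N_r(α)`: the number of pairs `(β,γ)` with `γ ⊢ α`, `r(γ) ≥ t`, `β ⊆ γ̄`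
and `|γ̄| = r`. -/
def Ncount (n k t : ℕ) (α : Finset (Fin n)) (r : ℕ) : ℕ :=
  (Finset.univ.filter fun bg : Finset (Scope n k) × Finset (Scope n k × Fin k) =>
    derives n k bg.2 α ∧ arityGE n k bg.2 t ∧ bg.1 ⊆ scopesOf n k bg.2 ∧
      (scopesOf n k bg.2).card = r).card

/-- `D` is a probability mass function. -/
def IsDist {Ω : Type*} [Fintype Ω] (D : Ω → ℝ) : Prop :=
  (∀ I, 0 ≤ D I) ∧ (∑ I : Ω, D I) = 1

/-- Marginal probability under `D` that an instance agrees with `I'` on the scopes of `V`. -/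
def imarg (n k : ℕ) (D : Inst n k → ℝ) (V : Finset (Scope n k)) (I' : Inst n k) : ℝ :=
  ∑ I : Inst n k,
    if ∀ S ∈ V, I.1 S = I'.1 S ∧ ∀ j, I.2 S j = I'.2 S j then D I else 0

/-- `D` is a `d`-conjunctive blockwise-dense distribution with parameter `δ` relative to
`D(p)`, with fixed block `U` fixed to the restricted instance given by `J`. -/
def IsCBD (n k : ℕ) (p : ℝ) (D : Inst n k → ℝ) (d δ : ℝ)
    (U : Finset (Scope n k)) (J : Inst n k) : Prop :=
  IsDist D ∧ (U.card : ℝ) ≤ d ∧ imarg n k D U J = 1 ∧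
  ∀ V : Finset (Scope n k), Disjoint V U → ∀ I' : Inst n k,
    imarg n k D V I' ≤ imarg n k (dpMass n k p) V I' ^ (1 - δ)

/-- `E_{I ∼ D}[φ_β(y) ψ_γ(b)]`. -/
def expBasis (n k : ℕ) (p : ℝ) (D : Inst n k → ℝ)
    (β : Finset (Scope n k)) (γ : Finset (Scope n k × Fin k)) : ℝ :=
  ∑ I : Inst n k, D I * phiF n k p β I.1 * psiF n k γ I.2

/-- The sup norm `‖φ_β ψ_γ‖_∞`. -/
def supPhiPsi (n k : ℕ) (p : ℝ) (β : Finset (Scope n k))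
    (γ : Finset (Scope n k × Fin k)) : ℝ :=
  max (Real.sqrt ((1 - p) / p)) (Real.sqrt (p / (1 - p))) ^ β.card

/-- `μ*` exhibits `ε(s_x, s_I)`-conditional Fourier decay, witnessed by the bounds `B`. -/
def CondDecay (n k : ℕ) (p : ℝ) (ηP : (Fin k → Bool) → ℝ) (dx dI b : ℕ) (δ : ℝ)
    (ε : ℕ → ℕ → ℝ)
    (B : Finset (Scope n k) → Finset (Fin n) → Finset (Scope n k) →
      Finset (Scope n k × Fin k) → ℝ) : Prop :=
  (∀ (D : Inst n k → ℝ) (U : Finset (Scope n k)) (J : Inst n k),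
      IsCBD n k p D (b : ℝ) δ U J →
      (∀ α β γ, |condMuHat n k p ηP U J α β γ| ≤ B U α β γ) ∧
      ∀ α : Finset (Fin n), α.card ≤ dx → ∀ sI : ℕ, sI ≤ dI →
        (∑ β : Finset (Scope n k), ∑ γ : Finset (Scope n k × Fin k),
            if sI ≤ (β ∪ scopesOf n k γ).card ∧ (β ∪ scopesOf n k γ).card ≤ dI then
              B U α β γ * expBasis n k p D β γ
            else 0)
          ≤ (n.choose α.card : ℝ) ^ (-(1 : ℝ) / 2) * ε α.card sI) ∧
  ∀ (α : Finset (Fin n)) (β β' : Finset (Scope n k)) (γ γ' : Finset (Scope n k × Fin k)),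
    Disjoint (β ∪ scopesOf n k γ) (β' ∪ scopesOf n k γ') →
    B ∅ α (β ∪ β') (γ ∪ γ') * supPhiPsi n k p β' γ' ≤ B ∅ α β γ

/-- The conditional Fourier decay rate for CSPs:
`ε(s_x, s_I) = (CΔ)^s (s/n)^{((t-2)/2)s} (s/s_x)^{s_x/2}` with `s = max(⌈s_x/k⌉, s_I)`. -/
def epsCSP (n k t : ℕ) (Δ C : ℝ) (sx sI : ℕ) : ℝ :=
  let s : ℕ := max (Nat.ceil ((sx : ℝ) / k)) sI
  (C * Δ) ^ s * ((s : ℝ) / n) ^ (((t : ℝ) - 2) / 2 * s) * ((s : ℝ) / sx) ^ ((sx : ℝ) / 2)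

/-- The error term `h` from the decomposition
`R_U μ̄* = π_U · L_{d''}(μ*|_U) + h`. -/
def errH (n k : ℕ) (p : ℝ) (ηP : (Fin k → Bool) → ℝ) (dx dI : ℕ)
    (U : Finset (Scope n k)) (J : Inst n k) : Assign n × Inst n k → ℝ :=
  fun w =>
    (Ld n k p dx (dI - U.card) (restrictU n k U J (muStar n k p ηP)) w
        - Ld n k p dx (dI - 2 * U.card) (restrictU n k U J (muStar n k p ηP)) w)
      + (restrictU n k U J (Ld n k p dx dI (muStar n k p ηP)) w
        - Ld n k p dx (dI - U.card)
            (restrictU n k U J (Ld n k p dx dI (muStar n k p ηP))) w)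

/-- A linear programming formulation of `CSP(P)` of size `R`. -/
structure LPForm (n k : ℕ) (P : (Fin k → Bool) → Bool) (R : ℕ) where
  dim : ℕ
  A : Matrix (Fin R) (Fin dim) ℝ
  bvec : Fin R → ℝ
  pt : Assign n → Fin dim → ℝ
  wt : Inst n k → Fin dim → ℝ
  feas : ∀ x, A.mulVec (pt x) ≤ bvec
  linearize : ∀ I x, dotProduct (wt I) (pt x) = objVal n k P x I

/-- The LP formulation certifies the upper bound `c` on the objective of instance `I`. -/
def Certifies {n k : ℕ} {P : (Fin k → Bool) → Bool} {R : ℕ}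
    (L : LPForm n k P R) (I : Inst n k) (c : ℝ) : Prop :=
  ∀ v : Fin L.dim → ℝ, L.A.mulVec v ≤ L.bvec → dotProduct (L.wt I) v ≤ c

end RandomCSP

end
namespace RandomCSP

noncomputable section Aux

lemma abs_sgn (b : Bool) : |sgn b| = 1 := by cases b <;> simp [sgn]

lemma sgn_xor (a b : Bool) : sgn (xor a b) = sgn a * sgn b := by
  cases a <;> cases b <;> norm_num [sgn]

lemma sum_assign {n : ℕ} (f : Fin n → Bool → ℝ) :
    ∑ x : Assign n, ∏ i, f i (x i) = ∏ i, ∑ v, f i v :=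
  (Fintype.prod_sum f).symm

set_option maxHeartbeats 1000000 in
lemma sum_inst {n k : ℕ} (g : Scope n k → Bool → (Fin k → Bool) → ℝ) :
    ∑ I : Inst n k, ∏ S, g S (I.1 S) (I.2 S) = ∏ S, ∑ v, ∑ c, g S v c := by
  have h1 : (∑ I : Inst n k, ∏ S, g S (I.1 S) (I.2 S))
      = ∑ F : Scope n k → Bool × (Fin k → Bool), ∏ S, g S (F S).1 (F S).2 :=
    Fintype.sum_equiv (Equiv.arrowProdEquivProdArrow (Scope n k) (fun _ => Bool) (fun _ => Fin k → Bool))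
      (fun F => ∏ S, g S (F S).1 (F S).2)
      (fun I => ∏ S, g S (I.1 S) (I.2 S)) (fun F => rfl) |>.symm
  rw [h1,
    show (∑ F : Scope n k → Bool × (Fin k → Bool), ∏ S, g S (F S).1 (F S).2)
        = ∏ S, ∑ vc : Bool × (Fin k → Bool), g S vc.1 vc.2 from
      (Fintype.prod_sum fun S (vc : Bool × (Fin k → Bool)) => g S vc.1 vc.2).symm]
  exact Finset.prod_congr rfl fun S _ => by rw [Fintype.sum_prod_type]

/-- Sum over a `Fin k → Bool` of a parity character. -/
lemma sum_parity {k : ℕ} (T : Finset (Fin k)) :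
    ∑ c : Fin k → Bool, ∏ j ∈ T, sgn (c j) = if T = ∅ then 2 ^ k else 0 := by
  have h1 : ∀ c : Fin k → Bool, ∏ j ∈ T, sgn (c j)
      = ∏ j : Fin k, (if j ∈ T then sgn (c j) else 1) := by
    intro c
    rw [Finset.prod_ite_mem, Finset.univ_inter]
  simp_rw [h1]
  rw [show (∑ c : Fin k → Bool, ∏ j : Fin k, (if j ∈ T then sgn (c j) else 1))
      = ∏ j : Fin k, ∑ v : Bool, (if j ∈ T then sgn v else 1) from
    sum_assign fun j v => if j ∈ T then sgn v else 1]
  by_cases hT : T = ∅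
  · simp [hT]
  · obtain ⟨j0, hj0⟩ := Finset.nonempty_iff_ne_empty.2 hT
    rw [if_neg hT]
    apply Finset.prod_eq_zero (Finset.mem_univ j0)
    simp [hj0, sgn]

/-- Unnormalized Fourier coefficient of the density `ηP`. -/
def ehat {k : ℕ} (ηP : (Fin k → Bool) → ℝ) (T : Finset (Fin k)) : ℝ :=
  ∑ z : Fin k → Bool, ηP z * ∏ j ∈ T, sgn (z j)

lemma two_halves_pow (k : ℕ) : (2:ℝ) ^ k * (1/2:ℝ) ^ k = 1 := by
  rw [← mul_pow]; norm_num

lemma abs_ehat_le {k : ℕ} {ηP : (Fin k → Bool) → ℝ} (h0 : ∀ z, 0 ≤ ηP z)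
    (h1 : (1/2:ℝ) ^ k * ∑ z : Fin k → Bool, ηP z = 1) (T : Finset (Fin k)) :
    |ehat ηP T| ≤ 2 ^ k := by
  have hsum : ∑ z : Fin k → Bool, ηP z = 2 ^ k := by
    have := two_halves_pow k
    calc ∑ z : Fin k → Bool, ηP z
        = (2:ℝ)^k * ((1/2:ℝ)^k * ∑ z : Fin k → Bool, ηP z) := by
          rw [← mul_assoc, this, one_mul]
      _ = 2 ^ k := by rw [h1, mul_one]
  calc |ehat ηP T| ≤ ∑ z : Fin k → Bool, |ηP z * ∏ j ∈ T, sgn (z j)| :=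
        Finset.abs_sum_le_sum_abs _ _
    _ = ∑ z : Fin k → Bool, ηP z := by
        refine Finset.sum_congr rfl fun z _ => ?_
        rw [abs_mul, Finset.abs_prod, abs_of_nonneg (h0 z)]
        simp [abs_sgn]
    _ = 2 ^ k := hsum

lemma ehat_zero {k t : ℕ} {ηP : (Fin k → Bool) → ℝ} (htk : t ≤ k)
    (h4 : ∀ T : Finset (Fin k), T.card = t - 1 → ∀ a : Fin k → Bool,
      ((1/2:ℝ) ^ k * ∑ z : Fin k → Bool, if ∀ j ∈ T, z j = a j then ηP z else 0)
        = (1/2:ℝ) ^ (t - 1))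
    (T : Finset (Fin k)) (hne : T ≠ ∅) (hcard : T.card ≤ t - 1) :
    ehat ηP T = 0 := by
  obtain ⟨T', hTT', hT'card⟩ := Finset.exists_superset_card_eq hcard
    (by simpa using le_trans (Nat.sub_le t 1) htk)
  -- the inner sum over `a` agreeing with `z` on `T'`
  have inner : ∀ z : Fin k → Bool,
      (∑ a : Fin k → Bool, if ∀ j ∈ T', z j = a j then ∏ j ∈ T, sgn (a j) else 0)
        = (∏ j ∈ T, sgn (z j)) * 2 ^ (k - T'.card) := by
    intro z
    have hfact : ∀ a : Fin k → Bool,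
        (if ∀ j ∈ T', z j = a j then ∏ j ∈ T, sgn (a j) else 0)
          = ∏ j : Fin k, ((if j ∈ T' then (if z j = a j then (1:ℝ) else 0) else 1)
              * (if j ∈ T then sgn (a j) else 1)) := by
      intro a
      rw [Finset.prod_mul_distrib, Fintype.prod_ite_mem, Fintype.prod_ite_mem,
        Finset.prod_boole]
      by_cases h : ∀ j ∈ T', z j = a j <;> simp [h]
    simp_rw [hfact]
    rw [sum_assign (fun j v => (if j ∈ T' then (if z j = v then (1:ℝ) else 0) else 1)
      * (if j ∈ T then sgn v else 1))]
    have hval : ∀ j : Fin k,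
        (∑ v : Bool, (if j ∈ T' then (if z j = v then (1:ℝ) else 0) else 1)
            * (if j ∈ T then sgn v else 1))
          = (if j ∈ T then sgn (z j) else if j ∈ T' then 1 else 2) := by
      intro j
      by_cases hjT : j ∈ T
      · have hjT' : j ∈ T' := hTT' hjT
        rw [Fintype.sum_bool]
        cases hz : z j <;> simp [hjT, hjT', hz, sgn]
      · by_cases hjT' : j ∈ T'
        · rw [Fintype.sum_bool]
          cases hz : z j <;> simp [hjT, hjT', hz]
        · simp [hjT, hjT']
    simp_rw [hval]
    rw [← Finset.prod_mul_prod_compl T']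
    have h1 : (∏ j ∈ T', (if j ∈ T then sgn (z j) else if j ∈ T' then (1:ℝ) else 2))
        = ∏ j ∈ T, sgn (z j) := by
      rw [show (∏ j ∈ T', (if j ∈ T then sgn (z j) else if j ∈ T' then (1:ℝ) else 2))
          = ∏ j ∈ T', (if j ∈ T then sgn (z j) else 1) from
        Finset.prod_congr rfl fun j hj => by by_cases hjT : j ∈ T <;> simp [hjT, hj]]
      rw [Finset.prod_ite_mem, Finset.inter_eq_right.2 hTT']
    have h2 : (∏ j ∈ T'ᶜ, (if j ∈ T then sgn (z j) else if j ∈ T' then (1:ℝ) else 2))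
        = 2 ^ (k - T'.card) := by
      rw [show (∏ j ∈ T'ᶜ, (if j ∈ T then sgn (z j) else if j ∈ T' then (1:ℝ) else 2))
          = ∏ _j ∈ T'ᶜ, (2:ℝ) from Finset.prod_congr rfl fun j hj => by
            have hj' := Finset.mem_compl.1 hj
            have hj'' : j ∉ T := fun h => hj' (hTT' h)
            simp [hj', hj'']]
      rw [Finset.prod_const, Finset.card_compl, Fintype.card_fin]
    rw [h1, h2]
  -- evaluate the double sum in two ways
  have main : (∑ a : Fin k → Bool,
      (∑ z : Fin k → Bool, if ∀ j ∈ T', z j = a j then ηP z else 0) * ∏ j ∈ T, sgn (a j))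
      = 2 ^ (k - T'.card) * ehat ηP T := by
    have step : ∀ a : Fin k → Bool,
        (∑ z : Fin k → Bool, if ∀ j ∈ T', z j = a j then ηP z else 0) * ∏ j ∈ T, sgn (a j)
          = ∑ z : Fin k → Bool, ηP z *
              (if ∀ j ∈ T', z j = a j then ∏ j ∈ T, sgn (a j) else 0) := by
      intro a
      rw [Finset.sum_mul]
      refine Finset.sum_congr rfl fun z _ => ?_
      by_cases h : ∀ j ∈ T', z j = a j <;> simp [h]
    simp_rw [step]
    rw [Finset.sum_comm]
    have : ∀ z : Fin k → Bool,
        (∑ a : Fin k → Bool, ηP z *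
            (if ∀ j ∈ T', z j = a j then ∏ j ∈ T, sgn (a j) else 0))
          = ηP z * ((∏ j ∈ T, sgn (z j)) * 2 ^ (k - T'.card)) := by
      intro z
      rw [← Finset.mul_sum, inner z]
    simp_rw [this]
    rw [show (∑ z : Fin k → Bool, ηP z * ((∏ j ∈ T, sgn (z j)) * 2 ^ (k - T'.card)))
        = (∑ z : Fin k → Bool, ηP z * ∏ j ∈ T, sgn (z j)) * 2 ^ (k - T'.card) from by
      rw [Finset.sum_mul]; exact Finset.sum_congr rfl fun z _ => by ring]
    rw [mul_comm]; rfl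
  have zero : (∑ a : Fin k → Bool,
      (∑ z : Fin k → Bool, if ∀ j ∈ T', z j = a j then ηP z else 0) * ∏ j ∈ T, sgn (a j))
      = 0 := by
    have hb : ∀ a : Fin k → Bool,
        (∑ z : Fin k → Bool, if ∀ j ∈ T', z j = a j then ηP z else 0)
          = 2 ^ k * (1/2:ℝ) ^ (t - 1) := by
      intro a
      have := h4 T' hT'card a
      calc (∑ z : Fin k → Bool, if ∀ j ∈ T', z j = a j then ηP z else 0)
          = (2:ℝ)^k * ((1/2:ℝ)^k *
              ∑ z : Fin k → Bool, if ∀ j ∈ T', z j = a j then ηP z else 0) := by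
            rw [← mul_assoc, two_halves_pow, one_mul]
        _ = 2 ^ k * (1/2:ℝ) ^ (t - 1) := by rw [this]
    simp_rw [hb]
    rw [← Finset.mul_sum, sum_parity, if_neg hne, mul_zero]
  rw [zero] at main
  have h2 : ((2:ℝ) ^ (k - T'.card)) ≠ 0 := by positivity
  exact (mul_eq_zero.1 main.symm).resolve_left h2

/-- The fiber of `γ` over a scope `S`. -/
def gb (n k : ℕ) (γ : Finset (Scope n k × Fin k)) (S : Scope n k) : Finset (Fin k) :=
  Finset.univ.filter fun j => (S, j) ∈ γ

lemma mem_scopesOf {n k : ℕ} {γ : Finset (Scope n k × Fin k)} {S : Scope n k} :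
    S ∈ scopesOf n k γ ↔ (gb n k γ S).Nonempty := by
  constructor
  · intro h
    obtain ⟨e, he, hes⟩ := Finset.mem_image.1 h
    subst hes
    exact ⟨e.2, Finset.mem_filter.2 ⟨Finset.mem_univ _, by rw [Prod.mk.eta]; exact he⟩⟩
  · rintro ⟨j, hj⟩
    exact Finset.mem_image.2 ⟨(S, j), (Finset.mem_filter.1 hj).2, rfl⟩

lemma filter_fst_prod {n k : ℕ} (γ : Finset (Scope n k × Fin k)) (S : Scope n k)
    (f : Scope n k × Fin k → ℝ) :
    ∏ e ∈ γ.filter (fun e => e.1 = S), f e = ∏ j ∈ gb n k γ S, f (S, j) := by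
  refine Finset.prod_bij (fun e _ => e.2) ?_ ?_ ?_ ?_
  · intro e he
    obtain ⟨h1, h2⟩ := Finset.mem_filter.1 he
    subst h2
    exact Finset.mem_filter.2 ⟨Finset.mem_univ _, by rw [Prod.mk.eta]; exact h1⟩
  · intro a ha b hb hab
    obtain ⟨_, h2⟩ := Finset.mem_filter.1 ha
    obtain ⟨_, h4⟩ := Finset.mem_filter.1 hb
    exact Prod.ext (h2.trans h4.symm) hab
  · intro j hj
    exact ⟨(S, j), Finset.mem_filter.2 ⟨(Finset.mem_filter.1 hj).2, rfl⟩, rfl⟩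
  · intro e he
    obtain ⟨_, h2⟩ := Finset.mem_filter.1 he
    subst h2
    rw [Prod.mk.eta]

lemma gb_card {n k : ℕ} (γ : Finset (Scope n k × Fin k)) (S : Scope n k) :
    (γ.filter fun e => e.1 = S).card = (gb n k γ S).card := by
  rw [← Finset.card_image_of_injOn (f := Prod.snd), gb]
  · congr 1
    ext j
    simp only [Finset.mem_image, Finset.mem_filter, Finset.mem_univ, true_and]
    constructor
    · rintro ⟨e, ⟨he, hf⟩, rfl⟩
      rwa [← hf]
    · intro h
      exact ⟨(S, j), ⟨h, rfl⟩, rfl⟩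
  · intro a ha b hb hab
    obtain ⟨_, h2⟩ := Finset.mem_filter.1 ha
    obtain ⟨_, h4⟩ := Finset.mem_filter.1 hb
    exact Prod.ext (h2.trans h4.symm) hab

lemma psiF_eq {n k : ℕ} (γ : Finset (Scope n k × Fin k)) (b : Scope n k → Fin k → Bool) :
    psiF n k γ b = ∏ S : Scope n k, ∏ j ∈ gb n k γ S, sgn (b S j) := by
  rw [psiF, ← Finset.prod_fiberwise_of_maps_to (g := Prod.fst) (t := Finset.univ)
    (fun e _ => Finset.mem_univ _) (fun e => sgn (b e.1 e.2))]
  exact Finset.prod_congr rfl fun S _ =>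
    filter_fst_prod γ S (fun e => sgn (b e.1 e.2))

/-- Change of variables `c ↦ c ⊕ m` in a sum against the parity character. -/
lemma sum_eta_parity {k : ℕ} (ηP : (Fin k → Bool) → ℝ) (m : Fin k → Bool)
    (T : Finset (Fin k)) :
    ∑ c : Fin k → Bool, ηP (fun j => xor (c j) (m j)) * ∏ j ∈ T, sgn (c j)
      = (∏ j ∈ T, sgn (m j)) * ehat ηP T := by
  have hinv : Function.Involutive (fun c : Fin k → Bool => fun j => xor (c j) (m j)) := by
    intro c; funext j
    show xor (xor (c j) (m j)) (m j) = c j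
    cases c j <;> cases m j <;> rfl
  have := Equiv.sum_comp hinv.toPerm
    (fun c : Fin k → Bool => ηP (fun j => xor (c j) (m j)) * ∏ j ∈ T, sgn (c j))
  rw [← this]
  have hpt : ∀ c : Fin k → Bool,
      ηP (fun j => xor (xor (c j) (m j)) (m j)) * ∏ j ∈ T, sgn (xor (c j) (m j))
        = (∏ j ∈ T, sgn (m j)) * (ηP c * ∏ j ∈ T, sgn (c j)) := by
    intro c
    have h1 : (fun j => xor (xor (c j) (m j)) (m j)) = c := hinv c
    rw [h1]
    simp_rw [sgn_xor]
    rw [Finset.prod_mul_distrib]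
    ring
  calc (∑ c : Fin k → Bool,
        ηP (fun j => xor (xor (c j) (m j)) (m j)) * ∏ j ∈ T, sgn (xor (c j) (m j)))
      = ∑ c : Fin k → Bool, (∏ j ∈ T, sgn (m j)) * (ηP c * ∏ j ∈ T, sgn (c j)) :=
        Finset.sum_congr rfl fun c _ => hpt c
    _ = (∏ j ∈ T, sgn (m j)) * ehat ηP T := by rw [← Finset.mul_sum]; rfl

lemma sqrt_help1 {p : ℝ} (hp0 : 0 < p) (hp1 : p < 1) :
    p * Real.sqrt ((1 - p) / p) = Real.sqrt (p * (1 - p)) := by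
  have hq : (0:ℝ) ≤ 1 - p := by linarith
  rw [Real.sqrt_div hq, Real.sqrt_mul hp0.le]
  rw [div_eq_mul_inv, ← mul_assoc]
  have hsp : Real.sqrt p ≠ 0 := by positivity
  field_simp
  nlinarith [Real.mul_self_sqrt hp0.le, Real.sqrt_nonneg (1 - p)]

lemma sqrt_help2 {p : ℝ} (hp0 : 0 < p) (hp1 : p < 1) :
    (1 - p) * Real.sqrt (p / (1 - p)) = Real.sqrt (p * (1 - p)) := by
  have hq : (0:ℝ) < 1 - p := by linarith
  have := sqrt_help1 hq (by linarith : (1:ℝ) - p < 1)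
  rw [show (1:ℝ) - (1 - p) = p from by ring] at this
  rw [this, mul_comm]

lemma phi_id {p : ℝ} (hp0 : 0 < p) (hp1 : p < 1) :
    p * phiY p true + (1 - p) * phiY p false = 0 := by
  have h1 : phiY p true = -Real.sqrt ((1 - p) / p) := by simp [phiY]
  have h2 : phiY p false = Real.sqrt (p / (1 - p)) := by simp [phiY]
  rw [h1, h2, mul_neg, sqrt_help1 hp0 hp1, sqrt_help2 hp0 hp1]
  ring

lemma card_fun_bool (k : ℕ) : Fintype.card (Fin k → Bool) = 2 ^ k := by simp

lemma sum_const_bits {k : ℕ} (A : ℝ) : ∑ _c : Fin k → Bool, A = 2 ^ k * A := by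
  rw [Finset.sum_const, Finset.card_univ, card_fun_bool, nsmul_eq_mul]
  push_cast; ring

lemma eta_total {k : ℕ} {ηP : (Fin k → Bool) → ℝ}
    (h1 : (1/2:ℝ) ^ k * ∑ z : Fin k → Bool, ηP z = 1) :
    ∑ z : Fin k → Bool, ηP z = 2 ^ k := by
  calc ∑ z : Fin k → Bool, ηP z
      = (2:ℝ)^k * ((1/2:ℝ)^k * ∑ z : Fin k → Bool, ηP z) := by
        rw [← mul_assoc, two_halves_pow, one_mul]
    _ = 2 ^ k := by rw [h1, mul_one]

lemma ehat_empty {k : ℕ} (ηP : (Fin k → Bool) → ℝ) :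
    ehat ηP ∅ = ∑ z : Fin k → Bool, ηP z := by simp [ehat]

/-- The per-scope block integrand. -/
def GS {n k : ℕ} (p : ℝ) (ηP : (Fin k → Bool) → ℝ) (U β : Finset (Scope n k))
    (γ : Finset (Scope n k × Fin k)) (x : Assign n) (S : Scope n k)
    (v : Bool) (c : Fin k → Bool) : ℝ :=
  ((if v then p else 1 - p) * (1/2:ℝ) ^ k)
    * (if S ∈ U then 1 else if v then ηP (fun j => xor (c j) (x (S.1 j))) else 1)
    * (if S ∈ β then phiY p v else 1)
    * ∏ j ∈ gb n k γ S, sgn (c j)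

/-- The per-scope block expectation. -/
def ES {n k : ℕ} (p : ℝ) (ηP : (Fin k → Bool) → ℝ) (U β : Finset (Scope n k))
    (γ : Finset (Scope n k × Fin k)) (x : Assign n) (S : Scope n k) : ℝ :=
  ∑ v : Bool, ∑ c : Fin k → Bool, GS p ηP U β γ x S v c

section ESsec

variable {n k : ℕ} {p : ℝ} {ηP : (Fin k → Bool) → ℝ} {U β : Finset (Scope n k)}
  {γ : Finset (Scope n k × Fin k)} (x : Assign n) (S : Scope n k)

lemma ES_one (hp0 : 0 < p) (hp1 : p < 1)
    (h1 : (1/2:ℝ) ^ k * ∑ z : Fin k → Bool, ηP z = 1)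
    (hβS : S ∉ β) (hgb : gb n k γ S = ∅) :
    ES p ηP U β γ x S = 1 := by
  unfold ES GS
  simp only [hgb, Finset.prod_empty, mul_one, if_neg hβS]
  by_cases hU : S ∈ U
  · simp only [if_pos hU, mul_one]
    rw [Fintype.sum_bool]
    simp only [if_true, Bool.false_eq_true, if_false]
    rw [sum_const_bits, sum_const_bits]
    have := two_halves_pow k
    nlinarith [this]
  · simp only [if_neg hU]
    rw [Fintype.sum_bool]
    simp only [if_true, Bool.false_eq_true, if_false, mul_one]
    have hT : (∑ c : Fin k → Bool, p * (1/2:ℝ)^k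
        * ηP (fun j => xor (c j) (x (S.1 j)))) = p := by
      rw [← Finset.mul_sum]
      have := sum_eta_parity ηP (fun j => x (S.1 j)) ∅
      simp only [Finset.prod_empty, mul_one, one_mul] at this
      rw [this, ehat_empty]
      calc p * (1/2:ℝ)^k * ∑ z : Fin k → Bool, ηP z
          = p * ((1/2:ℝ)^k * ∑ z : Fin k → Bool, ηP z) := by ring
        _ = p := by rw [h1, mul_one]
    rw [hT, sum_const_bits]
    have := two_halves_pow k
    nlinarith [this]

lemma ES_U_zero (hp0 : 0 < p) (hp1 : p < 1)
    (hU : S ∈ U) (h : S ∈ β ∨ gb n k γ S ≠ ∅) :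
    ES p ηP U β γ x S = 0 := by
  unfold ES GS
  simp only [if_pos hU, mul_one]
  by_cases hgb : gb n k γ S = ∅
  · obtain hβS := h.resolve_right (fun hh => hh hgb)
    simp only [hgb, Finset.prod_empty, mul_one, if_pos hβS]
    rw [Fintype.sum_bool]
    simp only [if_true, Bool.false_eq_true, if_false]
    rw [sum_const_bits, sum_const_bits]
    have h2 := two_halves_pow k
    have h3 := phi_id hp0 hp1
    nlinarith [h2, h3]
  · have hz : ∀ v : Bool, (∑ c : Fin k → Bool,
        ((if v then p else 1 - p) * (1/2:ℝ)^k) * (if S ∈ β then phiY p v else 1)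
          * ∏ j ∈ gb n k γ S, sgn (c j)) = 0 := by
      intro v
      rw [← Finset.mul_sum, sum_parity, if_neg hgb, mul_zero]
    rw [Fintype.sum_bool, hz true, hz false, add_zero]

lemma ES_beta_zero (hp0 : 0 < p) (hp1 : p < 1)
    (h1 : (1/2:ℝ) ^ k * ∑ z : Fin k → Bool, ηP z = 1)
    (hU : S ∉ U) (hβS : S ∈ β) (hgb : gb n k γ S = ∅) :
    ES p ηP U β γ x S = 0 := by
  unfold ES GS
  simp only [hgb, Finset.prod_empty, mul_one, if_neg hU, if_pos hβS]
  rw [Fintype.sum_bool]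
  simp only [if_true, Bool.false_eq_true, if_false, mul_one]
  have hT : (∑ c : Fin k → Bool, p * (1/2:ℝ)^k
      * ηP (fun j => xor (c j) (x (S.1 j))) * phiY p true) = p * phiY p true := by
    rw [show (∑ c : Fin k → Bool, p * (1/2:ℝ)^k
        * ηP (fun j => xor (c j) (x (S.1 j))) * phiY p true)
      = p * (1/2:ℝ)^k * phiY p true * ∑ c : Fin k → Bool,
          ηP (fun j => xor (c j) (x (S.1 j))) * ∏ j ∈ (∅ : Finset (Fin k)), sgn (c j) from by
        rw [Finset.mul_sum]; exact Finset.sum_congr rfl fun c _ => by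
          simp only [Finset.prod_empty, mul_one]; ring]
    rw [sum_eta_parity, ehat_empty]
    simp only [Finset.prod_empty, one_mul]
    calc p * (1/2:ℝ)^k * phiY p true * ∑ z : Fin k → Bool, ηP z
        = p * phiY p true * ((1/2:ℝ)^k * ∑ z : Fin k → Bool, ηP z) := by ring
      _ = p * phiY p true := by rw [h1, mul_one]
  rw [hT, sum_const_bits]
  have h2 := two_halves_pow k
  have h3 := phi_id hp0 hp1
  have h4 : (2:ℝ)^k * ((1 - p) * (1/2:ℝ)^k * phiY p false) = (1 - p) * phiY p false := by
    rw [show (2:ℝ)^k * ((1 - p) * (1/2:ℝ)^k * phiY p false)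
      = ((2:ℝ)^k * (1/2:ℝ)^k) * ((1 - p) * phiY p false) from by ring, h2, one_mul]
  linarith [h3, h4]

lemma ES_true_term (hU : S ∉ U) :
    (∑ c : Fin k → Bool, GS p ηP U β γ x S true c)
      = (∏ j ∈ gb n k γ S, sgn (x (S.1 j)))
        * ((1/2:ℝ)^k * ehat ηP (gb n k γ S)) * ((if S ∈ β then phiY p true else 1) * p) := by
  unfold GS
  simp only [if_neg hU, eq_self_iff_true, if_true]
  rw [show (∑ c : Fin k → Bool, p * (1/2:ℝ)^k * ηP (fun j => xor (c j) (x (S.1 j)))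
      * (if S ∈ β then phiY p true else 1) * ∏ j ∈ gb n k γ S, sgn (c j))
    = p * (1/2:ℝ)^k * (if S ∈ β then phiY p true else 1) * ∑ c : Fin k → Bool,
        ηP (fun j => xor (c j) (x (S.1 j))) * ∏ j ∈ gb n k γ S, sgn (c j) from by
      rw [Finset.mul_sum]; exact Finset.sum_congr rfl fun c _ => by ring]
  rw [sum_eta_parity]
  ring

lemma ES_false_term (hgb : gb n k γ S ≠ ∅) :
    (∑ c : Fin k → Bool, GS p ηP U β γ x S false c) = 0 := by
  unfold GS
  simp only [Bool.false_eq_true, if_false]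
  rw [show (∑ c : Fin k → Bool, (1 - p) * (1/2:ℝ)^k
      * (if S ∈ U then 1 else 1) * (if S ∈ β then phiY p false else 1)
      * ∏ j ∈ gb n k γ S, sgn (c j))
    = (1 - p) * (1/2:ℝ)^k * (if S ∈ U then 1 else 1)
        * (if S ∈ β then phiY p false else 1)
        * ∑ c : Fin k → Bool, ∏ j ∈ gb n k γ S, sgn (c j) from by
      rw [Finset.mul_sum]]
  rw [sum_parity, if_neg hgb, mul_zero]

lemma ES_main (hU : S ∉ U) (hgb : gb n k γ S ≠ ∅) :
    ES p ηP U β γ x S = (∏ j ∈ gb n k γ S, sgn (x (S.1 j)))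
      * ((1/2:ℝ)^k * ehat ηP (gb n k γ S)) * ((if S ∈ β then phiY p true else 1) * p) := by
  unfold ES
  rw [Fintype.sum_bool, ES_true_term x S hU, ES_false_term x S hgb, add_zero]

lemma ES_small {t : ℕ} (hp0 : 0 < p) (hp1 : p < 1) (htk : t ≤ k)
    (h4 : ∀ T : Finset (Fin k), T.card = t - 1 → ∀ a : Fin k → Bool,
      ((1/2:ℝ) ^ k * ∑ z : Fin k → Bool, if ∀ j ∈ T, z j = a j then ηP z else 0)
        = (1/2:ℝ) ^ (t - 1))
    (hgb : gb n k γ S ≠ ∅) (hcard : (gb n k γ S).card ≤ t - 1) :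
    ES p ηP U β γ x S = 0 := by
  by_cases hU : S ∈ U
  · exact ES_U_zero x S hp0 hp1 hU (Or.inr hgb)
  · rw [ES_main x S hU hgb, ehat_zero htk h4 _ hgb hcard]
    ring

end ESsec

section Marg

variable {n k : ℕ}

lemma indicator_x_eq (V : Finset (Fin n)) (x x' : Assign n) :
    (∏ i : Fin n, ((1/2:ℝ) * (if i ∈ V then (if x' i = x i then 1 else 0) else 1)))
      = (1/2:ℝ)^n * (if (∀ i ∈ V, x' i = x i) then 1 else 0) := by
  rw [Finset.prod_mul_distrib, Finset.prod_const, Finset.card_univ, Fintype.card_fin,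
    Fintype.prod_ite_mem, Finset.prod_boole]
  by_cases h : ∀ i ∈ V, x' i = x i <;> simp [h]

lemma sum_indicator_x (V : Finset (Fin n)) (x : Assign n) :
    ∑ x' : Assign n, ∏ i : Fin n,
        ((1/2:ℝ) * (if i ∈ V then (if x' i = x i then 1 else 0) else 1))
      = (1/2:ℝ)^V.card := by
  rw [sum_assign (fun i v => (1/2:ℝ) * (if i ∈ V then (if v = x i then 1 else 0) else 1))]
  have hv : ∀ i : Fin n,
      (∑ v : Bool, (1/2:ℝ) * (if i ∈ V then (if v = x i then 1 else 0) else 1))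
        = if i ∈ V then (1/2:ℝ) else 1 := by
    intro i
    by_cases hi : i ∈ V
    · rw [Fintype.sum_bool]
      cases hx : x i <;> simp [hi, hx] <;> norm_num
    · rw [Fintype.sum_bool]; simp [hi]; norm_num
  simp_rw [hv]
  rw [Fintype.prod_ite_mem, Finset.prod_const]

lemma sum_pair_collapse {k : ℕ} (h : Bool → (Fin k → Bool) → ℝ) (a : Bool)
    (b : Fin k → Bool) :
    (∑ v : Bool, ∑ c : Fin k → Bool,
        h v c * (if v = a ∧ ∀ j, c j = b j then 1 else 0)) = h a b := by
  have hpt : ∀ (v : Bool) (c : Fin k → Bool),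
      h v c * (if v = a ∧ ∀ j, c j = b j then 1 else 0)
        = if v = a then (if c = b then h v c else 0) else 0 := by
    intro v c
    by_cases hv : v = a <;> by_cases hc : c = b
    · simp [hv, hc]
    · have : ¬ ∀ j, c j = b j := fun hj => hc (funext hj)
      simp [hv, hc, this]
    · simp [hv]
    · simp [hv]
  simp_rw [hpt]
  have h1 : ∀ v : Bool, (∑ c : Fin k → Bool, if v = a then (if c = b then h v c else 0) else 0)
      = if v = a then h v b else 0 := by
    intro v
    by_cases hv : v = a
    · simp only [if_pos hv]
      exact Finset.sum_ite_eq' Finset.univ b (h v) |>.trans (by simp)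
    · simp [hv]
  simp_rw [h1]
  exact Finset.sum_ite_eq' Finset.univ a (fun v => h v b) |>.trans (by simp)

lemma mem_varsOf {U : Finset (Scope n k)} {S : Scope n k} (hS : S ∈ U) (j : Fin k) :
    S.1 j ∈ varsOf n k U :=
  Finset.mem_biUnion.2 ⟨S, hS, Finset.mem_image.2 ⟨j, Finset.mem_univ _, rfl⟩⟩

/-- The background marginal. -/
lemma marg_bg_eq (p : ℝ) (V' : Finset (Fin n)) (U' : Finset (Scope n k))
    (x : Assign n) (I : Inst n k) :
    marg n k (bgMass n k p) V' U' (x, I)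
      = (1/2:ℝ)^V'.card * ∏ S ∈ U', ((if I.1 S then p else 1 - p) * (1/2:ℝ)^k) := by
  rw [marg, Fintype.sum_prod_type]
  have point : ∀ (x' : Assign n) (I' : Inst n k),
      (if agreeOn n k V' U' (x', I') (x, I) then bgMass n k p (x', I') else 0)
        = (∏ i : Fin n, ((1/2:ℝ) * (if i ∈ V' then (if x' i = x i then 1 else 0) else 1)))
          * ∏ S : Scope n k, (((if I'.1 S then p else 1 - p) * (1/2:ℝ)^k)
              * (if S ∈ U' then
                  (if I'.1 S = I.1 S ∧ ∀ j, I'.2 S j = I.2 S j then 1 else 0) else 1)) := by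
    intro x' I'
    rw [indicator_x_eq, Finset.prod_mul_distrib, Fintype.prod_ite_mem, Finset.prod_boole]
    have hbg : bgMass n k p (x', I') = (1/2:ℝ)^n *
        ∏ S : Scope n k, ((if I'.1 S then p else 1 - p) * (1/2:ℝ)^k) := by
      rw [bgMass, dpMass, Finset.prod_mul_distrib, Finset.prod_const, Finset.card_univ,
        mul_comm (Fintype.card (Scope n k)) k, pow_mul]
    by_cases hA : ∀ i ∈ V', x' i = x i <;> by_cases hB : ∀ S ∈ U',
        I'.1 S = I.1 S ∧ ∀ j, I'.2 S j = I.2 S j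
    · rw [if_pos ⟨hA, hB⟩, hbg, if_pos hA, if_pos hB]; ring
    · rw [if_neg (fun h => hB h.2), if_neg hB]; ring
    · rw [if_neg (fun h => hA h.1), if_neg hA]; ring
    · rw [if_neg (fun h => hA h.1), if_neg hA]; ring
  simp_rw [point]
  have h1 : ∀ x' : Assign n,
      (∑ I' : Inst n k,
        (∏ i : Fin n, ((1/2:ℝ) * (if i ∈ V' then (if x' i = x i then 1 else 0) else 1)))
          * ∏ S : Scope n k, (((if I'.1 S then p else 1 - p) * (1/2:ℝ)^k)
              * (if S ∈ U' then
                  (if I'.1 S = I.1 S ∧ ∀ j, I'.2 S j = I.2 S j then 1 else 0) else 1)))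
        = (∏ i : Fin n, ((1/2:ℝ) * (if i ∈ V' then (if x' i = x i then 1 else 0) else 1)))
          * ∏ S ∈ U', ((if I.1 S then p else 1 - p) * (1/2:ℝ)^k) := by
    intro x'
    rw [← Finset.mul_sum]
    congr 1
    rw [sum_inst (fun S v c => ((if v then p else 1 - p) * (1/2:ℝ)^k)
      * (if S ∈ U' then (if v = I.1 S ∧ ∀ j, c j = I.2 S j then 1 else 0) else 1))]
    rw [← Fintype.prod_ite_mem U' (fun S => (if I.1 S then p else 1 - p) * (1/2:ℝ)^k)]
    refine Finset.prod_congr rfl fun S _ => ?_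
    by_cases hS : S ∈ U'
    · simp only [if_pos hS]
      exact sum_pair_collapse (fun v c => (if v then p else 1 - p) * (1/2:ℝ)^k)
        (I.1 S) (I.2 S)
    · simp only [if_neg hS, mul_one]
      rw [Fintype.sum_bool]
      simp only [if_true, Bool.false_eq_true, if_false]
      rw [sum_const_bits, sum_const_bits]
      have := two_halves_pow k
      nlinarith [this]
  simp_rw [h1]
  rw [← Finset.sum_mul, sum_indicator_x]

/-- The planted marginal over the block `(varsOf U, U)`. -/
lemma marg_planted_eq (p : ℝ) (ηP : (Fin k → Bool) → ℝ)
    (h1 : (1/2:ℝ) ^ k * ∑ z : Fin k → Bool, ηP z = 1)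
    (U : Finset (Scope n k)) (x : Assign n) (J : Inst n k) :
    marg n k (plantedMass n k p ηP) (varsOf n k U) U (x, J)
      = (1/2:ℝ)^(varsOf n k U).card * ∏ S ∈ U,
          (if J.1 S then p * (ηP (litBits n k x J S) * (1/2:ℝ)^k)
           else (1 - p) * (1/2:ℝ)^k) := by
  set V := varsOf n k U with hV
  rw [marg, Fintype.sum_prod_type]
  have point : ∀ (x' : Assign n) (I' : Inst n k),
      (if agreeOn n k V U (x', I') (x, J) then plantedMass n k p ηP (x', I') else 0)
        = (∏ i : Fin n, ((1/2:ℝ) * (if i ∈ V then (if x' i = x i then 1 else 0) else 1)))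
          * ∏ S : Scope n k,
            ((if I'.1 S then p * (ηP (fun j => xor (I'.2 S j) (x' (S.1 j))) * (1/2:ℝ)^k)
                else (1 - p) * (1/2:ℝ)^k)
              * (if S ∈ U then
                  (if I'.1 S = J.1 S ∧ ∀ j, I'.2 S j = J.2 S j then 1 else 0) else 1)) := by
    intro x' I'
    rw [indicator_x_eq, Finset.prod_mul_distrib, Fintype.prod_ite_mem, Finset.prod_boole]
    have hpm : plantedMass n k p ηP (x', I') = (1/2:ℝ)^n *
        ∏ S : Scope n k,
          (if I'.1 S then p * (ηP (fun j => xor (I'.2 S j) (x' (S.1 j))) * (1/2:ℝ)^k)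
           else (1 - p) * (1/2:ℝ)^k) := rfl
    by_cases hA : ∀ i ∈ V, x' i = x i <;> by_cases hB : ∀ S ∈ U,
        I'.1 S = J.1 S ∧ ∀ j, I'.2 S j = J.2 S j
    · rw [if_pos ⟨hA, hB⟩, hpm, if_pos hA, if_pos hB]; ring
    · rw [if_neg (fun h => hB h.2), if_neg hB]; ring
    · rw [if_neg (fun h => hA h.1), if_neg hA]; ring
    · rw [if_neg (fun h => hA h.1), if_neg hA]; ring
  simp_rw [point]
  have h2 : ∀ x' : Assign n,
      (∑ I' : Inst n k,
        (∏ i : Fin n, ((1/2:ℝ) * (if i ∈ V then (if x' i = x i then 1 else 0) else 1)))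
          * ∏ S : Scope n k,
            ((if I'.1 S then p * (ηP (fun j => xor (I'.2 S j) (x' (S.1 j))) * (1/2:ℝ)^k)
                else (1 - p) * (1/2:ℝ)^k)
              * (if S ∈ U then
                  (if I'.1 S = J.1 S ∧ ∀ j, I'.2 S j = J.2 S j then 1 else 0) else 1)))
        = (∏ i : Fin n, ((1/2:ℝ) * (if i ∈ V then (if x' i = x i then 1 else 0) else 1)))
          * ∏ S ∈ U,
            (if J.1 S then p * (ηP (fun j => xor (J.2 S j) (x' (S.1 j))) * (1/2:ℝ)^k)
             else (1 - p) * (1/2:ℝ)^k) := by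
    intro x'
    rw [← Finset.mul_sum]
    congr 1
    rw [sum_inst (fun S v c =>
      ((if v then p * (ηP (fun j => xor (c j) (x' (S.1 j))) * (1/2:ℝ)^k)
          else (1 - p) * (1/2:ℝ)^k)
        * (if S ∈ U then (if v = J.1 S ∧ ∀ j, c j = J.2 S j then 1 else 0) else 1)))]
    rw [← Fintype.prod_ite_mem U (fun S =>
      (if J.1 S then p * (ηP (fun j => xor (J.2 S j) (x' (S.1 j))) * (1/2:ℝ)^k)
       else (1 - p) * (1/2:ℝ)^k))]
    refine Finset.prod_congr rfl fun S _ => ?_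
    by_cases hS : S ∈ U
    · simp only [if_pos hS]
      exact sum_pair_collapse (fun v c =>
        (if v then p * (ηP (fun j => xor (c j) (x' (S.1 j))) * (1/2:ℝ)^k)
         else (1 - p) * (1/2:ℝ)^k)) (J.1 S) (J.2 S)
    · simp only [if_neg hS, mul_one]
      rw [Fintype.sum_bool]
      simp only [if_true, Bool.false_eq_true, if_false]
      have hT : (∑ c : Fin k → Bool,
          p * (ηP (fun j => xor (c j) (x' (S.1 j))) * (1/2:ℝ)^k)) = p := by
        rw [show (∑ c : Fin k → Bool,
            p * (ηP (fun j => xor (c j) (x' (S.1 j))) * (1/2:ℝ)^k))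
          = p * (1/2:ℝ)^k * ∑ c : Fin k → Bool,
              ηP (fun j => xor (c j) (x' (S.1 j)))
                * ∏ j ∈ (∅ : Finset (Fin k)), sgn (c j) from by
            rw [Finset.mul_sum]; exact Finset.sum_congr rfl fun c _ => by
              simp only [Finset.prod_empty, mul_one]; ring]
        rw [sum_eta_parity, ehat_empty]
        simp only [Finset.prod_empty, one_mul]
        calc p * (1/2:ℝ)^k * ∑ z : Fin k → Bool, ηP z
            = p * ((1/2:ℝ)^k * ∑ z : Fin k → Bool, ηP z) := by ring
          _ = p := by rw [h1, mul_one]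
      rw [hT, sum_const_bits]
      have h5 := two_halves_pow k
      have h6 : (2:ℝ)^k * ((1 - p) * (1/2:ℝ)^k) = 1 - p := by
        rw [show (2:ℝ)^k * ((1 - p) * (1/2:ℝ)^k)
          = ((2:ℝ)^k * (1/2:ℝ)^k) * (1 - p) from by ring, h5, one_mul]
      linarith [h6]
  simp_rw [h2]
  have h3 : ∀ x' : Assign n,
      (∏ i : Fin n, ((1/2:ℝ) * (if i ∈ V then (if x' i = x i then 1 else 0) else 1)))
        * ∏ S ∈ U,
          (if J.1 S then p * (ηP (fun j => xor (J.2 S j) (x' (S.1 j))) * (1/2:ℝ)^k)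
           else (1 - p) * (1/2:ℝ)^k)
      = (∏ i : Fin n, ((1/2:ℝ) * (if i ∈ V then (if x' i = x i then 1 else 0) else 1)))
        * ∏ S ∈ U,
          (if J.1 S then p * (ηP (litBits n k x J S) * (1/2:ℝ)^k)
           else (1 - p) * (1/2:ℝ)^k) := by
    intro x'
    by_cases hA : ∀ i ∈ V, x' i = x i
    · congr 1
      refine Finset.prod_congr rfl fun S hS => ?_
      have : (fun j => xor (J.2 S j) (x' (S.1 j))) = litBits n k x J S := by
        funext j
        rw [litBits, hA (S.1 j) (hV ▸ mem_varsOf hS j)]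
      rw [this]
    · push_neg at hA
      obtain ⟨i0, hi0, hne⟩ := hA
      have hz : (∏ i : Fin n,
          ((1/2:ℝ) * (if i ∈ V then (if x' i = x i then 1 else 0) else 1))) = 0 := by
        apply Finset.prod_eq_zero (Finset.mem_univ i0)
        simp [hi0, hne]
      rw [hz, zero_mul, zero_mul]
  simp_rw [h3]
  rw [← Finset.sum_mul, sum_indicator_x]

end Marg

section CondMu

variable {n k : ℕ} {p : ℝ} {ηP : (Fin k → Bool) → ℝ}

lemma bgMass_eq (p : ℝ) (w : Assign n × Inst n k) :
    bgMass n k p w = (1/2:ℝ)^n *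
      ∏ S : Scope n k, ((if w.2.1 S then p else 1 - p) * (1/2:ℝ)^k) := by
  rw [bgMass, dpMass, Finset.prod_mul_distrib, Finset.prod_const, Finset.card_univ,
    mul_comm (Fintype.card (Scope n k)) k, pow_mul]

lemma div_div_helper (c1 c2 A B G : ℝ) (hc1 : c1 ≠ 0) (hc2 : c2 ≠ 0)
    (hA : A ≠ 0) (hG : G ≠ 0) :
    (c1 * c2 * (A * B)) / (c1 * A) / (c2 * G) = B / G := by
  field_simp

lemma condMu_eq (hp0 : 0 < p) (hp1 : p < 1)
    (h1 : (1/2:ℝ) ^ k * ∑ z : Fin k → Bool, ηP z = 1)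
    (U : Finset (Scope n k)) (J : Inst n k)
    (hpos : ∀ x : Assign n, 0 < marg n k (plantedMass n k p ηP) (varsOf n k U) U (x, J))
    (w : Assign n × Inst n k) :
    condMu n k p ηP U J w
      = ∏ S : Scope n k, (if S ∈ U then 1 else
          (if w.2.1 S then ηP (litBits n k w.1 w.2 S) else 1)) := by
  obtain ⟨x, I⟩ := w
  have hq : (0:ℝ) < 1 - p := by linarith
  have hhk : (0:ℝ) < (1/2:ℝ)^k := by positivity
  -- numerator decomposition
  have hplant : plantedMass n k p ηP (x, override n k U J I)
      = (1/2:ℝ)^n * ((∏ S ∈ U,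
            (if J.1 S then p * (ηP (litBits n k x J S) * (1/2:ℝ)^k)
             else (1 - p) * (1/2:ℝ)^k))
        * ∏ S ∈ Uᶜ,
            (if I.1 S then p * (ηP (litBits n k x I S) * (1/2:ℝ)^k)
             else (1 - p) * (1/2:ℝ)^k)) := by
    rw [plantedMass]
    congr 1
    rw [← Finset.prod_mul_prod_compl U]
    congr 1
    · refine Finset.prod_congr rfl fun S hS => ?_
      have h1' : (override n k U J I).1 S = J.1 S := by simp [override, hS]
      have h2' : litBits n k x (override n k U J I) S = litBits n k x J S := by
        funext j; simp [litBits, override, hS]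
      rw [h1', h2']
    · refine Finset.prod_congr rfl fun S hS => ?_
      have hS' : S ∉ U := Finset.mem_compl.1 hS
      have h1' : (override n k U J I).1 S = I.1 S := by simp [override, hS']
      have h2' : litBits n k x (override n k U J I) S = litBits n k x I S := by
        funext j; simp [litBits, override, hS']
      rw [h1', h2']
  have hmargp := marg_planted_eq p ηP h1 U x J
  have hmargbg : marg n k (bgMass n k p) (varsOf n k U)ᶜ Uᶜ (x, override n k U J I)
      = (1/2:ℝ)^((varsOf n k U)ᶜ.card)
        * ∏ S ∈ Uᶜ, ((if I.1 S then p else 1 - p) * (1/2:ℝ)^k) := by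
    rw [marg_bg_eq]
    congr 1
    refine Finset.prod_congr rfl fun S hS => ?_
    have hS' : S ∉ U := Finset.mem_compl.1 hS
    have h3' : (override n k U J I).1 S = I.1 S := by simp [override, hS']
    rw [h3']
  -- positivity of the `U`-part
  have hApos : 0 < ∏ S ∈ U,
      (if J.1 S then p * (ηP (litBits n k x J S) * (1/2:ℝ)^k)
       else (1 - p) * (1/2:ℝ)^k) := by
    have h := hpos x
    rw [hmargp] at h
    have hc : (0:ℝ) < (1/2:ℝ)^(varsOf n k U).card := by positivity
    by_contra hcon
    push_neg at hcon
    nlinarith [hc, h, hcon]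
  have hGpos : 0 < ∏ S ∈ Uᶜ, ((if I.1 S then p else 1 - p) * (1/2:ℝ)^k) := by
    apply Finset.prod_pos
    intro S _
    by_cases hI : I.1 S
    · rw [if_pos hI]; exact mul_pos hp0 hhk
    · rw [if_neg hI]; exact mul_pos hq hhk
  have hpow : (1/2:ℝ)^n = (1/2:ℝ)^(varsOf n k U).card * (1/2:ℝ)^((varsOf n k U)ᶜ.card) := by
    rw [← pow_add, Finset.card_add_card_compl, Fintype.card_fin]
  rw [condMu, hplant, hmargp, hmargbg, hpow,
    div_div_helper _ _ _ _ _ (by positivity) (by positivity) hApos.ne' hGpos.ne',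
    ← Finset.prod_div_distrib]
  rw [show (∏ S : Scope n k, (if S ∈ U then 1 else
      (if (x, I).2.1 S then ηP (litBits n k (x, I).1 (x, I).2 S) else 1)))
    = ∏ S ∈ Uᶜ, (if I.1 S then ηP (litBits n k x I S) else 1) from by
      rw [← Fintype.prod_ite_mem Uᶜ (fun S => if I.1 S then ηP (litBits n k x I S) else 1)]
      exact Finset.prod_congr rfl fun S _ => by
        by_cases hS : S ∈ U <;> simp [hS]]
  refine Finset.prod_congr rfl fun S _ => ?_
  by_cases hI : I.1 S
  · simp only [if_pos hI]
    rw [show p * (ηP (litBits n k x I S) * (1/2:ℝ)^k) / (p * (1/2:ℝ)^k)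
      = ηP (litBits n k x I S) * (p * (1/2:ℝ)^k) / (p * (1/2:ℝ)^k) from by ring]
    rw [mul_div_assoc, div_self (by positivity), mul_one]
  · simp only [if_neg hI]
    exact div_self (by positivity)

/-- Full factorization of the Fourier coefficient of the conditioned density. -/
lemma condMuHat_rep (hp0 : 0 < p) (hp1 : p < 1)
    (h1 : (1/2:ℝ) ^ k * ∑ z : Fin k → Bool, ηP z = 1)
    (U : Finset (Scope n k)) (J : Inst n k)
    (hpos : ∀ x : Assign n, 0 < marg n k (plantedMass n k p ηP) (varsOf n k U) U (x, J))
    (α : Finset (Fin n)) (β : Finset (Scope n k)) (γ : Finset (Scope n k × Fin k)) :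
    condMuHat n k p ηP U J α β γ
      = ∑ x : Assign n, ((1/2:ℝ)^n * chiF n α x) * ∏ S : Scope n k, ES p ηP U β γ x S := by
  rw [condMuHat, fhat]
  have point : ∀ w : Assign n × Inst n k,
      bgMass n k p w * condMu n k p ηP U J w * chiF n α w.1 * phiF n k p β w.2.1
          * psiF n k γ w.2.2
        = ((1/2:ℝ)^n * chiF n α w.1)
          * ∏ S : Scope n k, GS p ηP U β γ w.1 S (w.2.1 S) (w.2.2 S) := by
    intro w
    rw [bgMass_eq, condMu_eq hp0 hp1 h1 U J hpos, psiF_eq]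
    rw [show phiF n k p β w.2.1 = ∏ S : Scope n k, (if S ∈ β then phiY p (w.2.1 S) else 1)
      from (Fintype.prod_ite_mem β (fun S => phiY p (w.2.1 S))).symm]
    simp only [GS, Finset.prod_mul_distrib]
    rw [show (∏ S : Scope n k, if S ∈ U then (1:ℝ) else
        if w.2.1 S then ηP (litBits n k w.1 w.2 S) else 1)
      = ∏ S : Scope n k, (if S ∈ U then (1:ℝ) else
        if w.2.1 S then ηP (fun j => xor (w.2.2 S j) (w.1 (S.1 j))) else 1) from rfl]
    ring
  simp_rw [point]
  rw [Fintype.sum_prod_type]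
  refine Finset.sum_congr rfl fun x _ => ?_
  have hpt : ∀ y : Inst n k,
      (1/2:ℝ)^n * chiF n α (x, y).1
          * ∏ S : Scope n k, GS p ηP U β γ (x, y).1 S ((x, y).2.1 S) ((x, y).2.2 S)
        = ((1/2:ℝ)^n * chiF n α x) * ∏ S : Scope n k, GS p ηP U β γ x S (y.1 S) (y.2 S) :=
    fun y => rfl
  refine (Finset.sum_congr rfl fun y _ => hpt y).trans ?_
  rw [← Finset.mul_sum]
  congr 1
  exact sum_inst (GS p ηP U β γ x)

end CondMu

section Final

variable {n k : ℕ} {p : ℝ} {ηP : (Fin k → Bool) → ℝ}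

lemma Xsum_eq (α : Finset (Fin n)) (γ : Finset (Scope n k × Fin k)) :
    (∑ x : Assign n, ((1/2:ℝ)^n * chiF n α x) * ∏ e ∈ γ, sgn (x (e.1.1 e.2)))
      = if derives n k γ α then 1 else 0 := by
  have point : ∀ x : Assign n,
      ((1/2:ℝ)^n * chiF n α x) * ∏ e ∈ γ, sgn (x (e.1.1 e.2))
        = ∏ i : Fin n, ((1/2:ℝ) * ((if i ∈ α then sgn (x i) else 1)
            * sgn (x i) ^ (γ.filter fun e => e.1.1 e.2 = i).card)) := by
    intro x
    have hfib : (∏ e ∈ γ, sgn (x (e.1.1 e.2)))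
        = ∏ i : Fin n, sgn (x i) ^ (γ.filter fun e => e.1.1 e.2 = i).card := by
      rw [← Finset.prod_fiberwise_of_maps_to
        (g := fun e : Scope n k × Fin k => e.1.1 e.2) (t := Finset.univ)
        (fun e _ => Finset.mem_univ _) (fun e => sgn (x (e.1.1 e.2)))]
      refine Finset.prod_congr rfl fun i _ => ?_
      rw [show (∏ e ∈ γ.filter (fun e => e.1.1 e.2 = i), sgn (x (e.1.1 e.2)))
          = ∏ _e ∈ γ.filter (fun e => e.1.1 e.2 = i), sgn (x i) from
        Finset.prod_congr rfl fun e he => by rw [(Finset.mem_filter.1 he).2]]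
      rw [Finset.prod_const]
    have hchi : chiF n α x = ∏ i : Fin n, (if i ∈ α then sgn (x i) else 1) :=
      (Fintype.prod_ite_mem α (fun i => sgn (x i))).symm
    rw [hfib, hchi, Finset.prod_mul_distrib, Finset.prod_mul_distrib,
      Finset.prod_const, Finset.card_univ, Fintype.card_fin]
    ring
  simp_rw [point]
  rw [sum_assign (fun i v => (1/2:ℝ) * ((if i ∈ α then sgn v else 1)
    * sgn v ^ (γ.filter fun e => e.1.1 e.2 = i).card))]
  have hbool : ∀ i : Fin n,
      (∑ v : Bool, (1/2:ℝ) * ((if i ∈ α then sgn v else 1)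
          * sgn v ^ (γ.filter fun e => e.1.1 e.2 = i).card))
        = if (i ∈ α ↔ Odd (γ.filter fun e => e.1.1 e.2 = i).card) then 1 else 0 := by
    intro i
    set c := (γ.filter fun e => e.1.1 e.2 = i).card with hc
    rw [Fintype.sum_bool]
    have hsT : sgn true = -1 := by simp [sgn]
    have hsF : sgn false = 1 := by simp [sgn]
    by_cases hα : i ∈ α
    · rcases Nat.even_or_odd c with he | ho
      · rw [if_neg (show ¬(i ∈ α ↔ Odd c) from
          fun hiff => (Nat.not_odd_iff_even.2 he) (hiff.1 hα))]
        simp only [if_pos hα, hsT, hsF, he.neg_one_pow, one_pow]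
        norm_num
      · rw [if_pos (show (i ∈ α ↔ Odd c) from iff_of_true hα ho)]
        simp only [if_pos hα, hsT, hsF, ho.neg_one_pow, one_pow]
        norm_num
    · rcases Nat.even_or_odd c with he | ho
      · rw [if_pos (show (i ∈ α ↔ Odd c) from
          iff_of_false hα (Nat.not_odd_iff_even.2 he))]
        simp only [if_neg hα, hsT, hsF, he.neg_one_pow, one_pow]
        norm_num
      · rw [if_neg (show ¬(i ∈ α ↔ Odd c) from fun hiff => hα (hiff.2 ho))]
        simp only [if_neg hα, hsT, hsF, ho.neg_one_pow, one_pow]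
        norm_num
  simp_rw [hbool]
  rw [Fintype.prod_boole]
  by_cases hd : derives n k γ α
  · have hd' : ∀ i : Fin n,
        (i ∈ α ↔ Odd (γ.filter fun e => e.1.1 e.2 = i).card) := hd
    rw [if_pos hd', if_pos hd]
  · have hd' : ¬ ∀ i : Fin n,
        (i ∈ α ↔ Odd (γ.filter fun e => e.1.1 e.2 = i).card) := fun h => hd h
    rw [if_neg hd', if_neg hd]

lemma rep_good (hp0 : 0 < p) (hp1 : p < 1)
    (h1 : (1/2:ℝ) ^ k * ∑ z : Fin k → Bool, ηP z = 1)
    (U : Finset (Scope n k)) (J : Inst n k)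
    (hpos : ∀ x : Assign n, 0 < marg n k (plantedMass n k p ηP) (varsOf n k U) U (x, J))
    (α : Finset (Fin n)) (β : Finset (Scope n k)) (γ : Finset (Scope n k × Fin k))
    (hβ : β ⊆ scopesOf n k γ) (hdγ : Disjoint (scopesOf n k γ) U) :
    condMuHat n k p ηP U J α β γ
      = (∏ S ∈ scopesOf n k γ, ((1/2:ℝ)^k * ehat ηP (gb n k γ S)
          * ((if S ∈ β then phiY p true else 1) * p)))
        * (if derives n k γ α then 1 else 0) := by
  rw [condMuHat_rep hp0 hp1 h1 U J hpos]
  have hx : ∀ x : Assign n, (∏ S : Scope n k, ES p ηP U β γ x S)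
      = (∏ e ∈ γ, sgn (x (e.1.1 e.2)))
        * ∏ S ∈ scopesOf n k γ, ((1/2:ℝ)^k * ehat ηP (gb n k γ S)
            * ((if S ∈ β then phiY p true else 1) * p)) := by
    intro x
    have hstep1 : (∏ S : Scope n k, ES p ηP U β γ x S)
        = ∏ S ∈ scopesOf n k γ, ES p ηP U β γ x S := by
      refine (Finset.prod_subset (Finset.subset_univ _) fun S _ hS => ?_).symm
      have hgb : gb n k γ S = ∅ :=
        Finset.not_nonempty_iff_eq_empty.1 (fun hne => hS (mem_scopesOf.2 hne))
      exact ES_one x S hp0 hp1 h1 (fun hb => hS (hβ hb)) hgb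
    have hstep2 : (∏ S ∈ scopesOf n k γ, ES p ηP U β γ x S)
        = ∏ S ∈ scopesOf n k γ, ((∏ j ∈ gb n k γ S, sgn (x (S.1 j)))
            * ((1/2:ℝ)^k * ehat ηP (gb n k γ S)
              * ((if S ∈ β then phiY p true else 1) * p))) := by
      refine Finset.prod_congr rfl fun S hS => ?_
      have hU : S ∉ U := Finset.disjoint_left.1 hdγ hS
      have hgb : gb n k γ S ≠ ∅ :=
        Finset.nonempty_iff_ne_empty.1 (mem_scopesOf.1 hS)
      rw [ES_main x S hU hgb]
      ring
    have hstep4 : (∏ S ∈ scopesOf n k γ, ∏ j ∈ gb n k γ S, sgn (x (S.1 j)))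
        = ∏ e ∈ γ, sgn (x (e.1.1 e.2)) := by
      rw [show (∏ S ∈ scopesOf n k γ, ∏ j ∈ gb n k γ S, sgn (x (S.1 j)))
          = ∏ S ∈ scopesOf n k γ, ∏ e ∈ γ.filter (fun e => e.1 = S),
              sgn (x (e.1.1 e.2)) from
        Finset.prod_congr rfl fun S _ =>
          (filter_fst_prod γ S (fun e => sgn (x (e.1.1 e.2)))).symm]
      exact Finset.prod_fiberwise_of_maps_to
        (fun e he => Finset.mem_image_of_mem _ he) _
    rw [hstep1, hstep2, Finset.prod_mul_distrib, hstep4]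
  simp_rw [hx]
  rw [show (∑ x : Assign n, ((1/2:ℝ)^n * chiF n α x) * ((∏ e ∈ γ, sgn (x (e.1.1 e.2)))
      * ∏ S ∈ scopesOf n k γ, ((1/2:ℝ)^k * ehat ηP (gb n k γ S)
          * ((if S ∈ β then phiY p true else 1) * p))))
    = (∑ x : Assign n, ((1/2:ℝ)^n * chiF n α x) * (∏ e ∈ γ, sgn (x (e.1.1 e.2))))
      * ∏ S ∈ scopesOf n k γ, ((1/2:ℝ)^k * ehat ηP (gb n k γ S)
          * ((if S ∈ β then phiY p true else 1) * p)) from by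
    rw [Finset.sum_mul]
    exact Finset.sum_congr rfl fun x _ => by ring]
  rw [Xsum_eq]
  ring

end Final

end Aux

/-- Fourier coefficient bounds for the conditioned planted density. -/
theorem condMuHat_bounds (n k t : ℕ) (hk : 2 ≤ k) (ht : 3 ≤ t) (htk : t ≤ k) (hn : k ≤ n)
    (P : (Fin k → Bool) → Bool) (ηP : (Fin k → Bool) → ℝ)
    (hP : SupportsUniform k t P ηP)
    (p : ℝ) (hp0 : 0 < p) (hp1 : p < 1)
    (U : Finset (Scope n k)) (J : Inst n k)
    (hpos : ∀ x : Assign n,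
      0 < marg n k (plantedMass n k p ηP) (varsOf n k U) U (x, J))
    (α : Finset (Fin n)) (β : Finset (Scope n k)) (γ : Finset (Scope n k × Fin k)) :
    (derives n k γ α ∧ arityGE n k γ t ∧ β ⊆ scopesOf n k γ ∧
        Disjoint β U ∧ Disjoint (scopesOf n k γ) U →
      |condMuHat n k p ηP U J α β γ|
        ≤ Real.sqrt (p * (1 - p)) ^ (scopesOf n k γ ∩ β).card
            * p ^ (scopesOf n k γ \ β).card) ∧
    (¬(derives n k γ α ∧ arityGE n k γ t ∧ β ⊆ scopesOf n k γ ∧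
        Disjoint β U ∧ Disjoint (scopesOf n k γ) U) →
      condMuHat n k p ηP U J α β γ = 0) := by
  obtain ⟨hη0, hηsum, _hsupp, hη4⟩ := hP
  have hzero : ∀ S0 : Scope n k, (∀ x : Assign n, ES p ηP U β γ x S0 = 0) →
      condMuHat n k p ηP U J α β γ = 0 := by
    intro S0 hS0
    rw [condMuHat_rep hp0 hp1 hηsum U J hpos α β γ]
    refine Finset.sum_eq_zero fun x _ => ?_
    rw [Finset.prod_eq_zero (Finset.mem_univ S0) (hS0 x), mul_zero]
  constructor
  · rintro ⟨hder, harity, hβ, hdβ, hdγ⟩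
    rw [rep_good hp0 hp1 hηsum U J hpos α β γ hβ hdγ, if_pos hder, mul_one]
    have hq0 : (0:ℝ) ≤ Real.sqrt (p * (1 - p)) := Real.sqrt_nonneg _
    have habs : |∏ S ∈ scopesOf n k γ, ((1/2:ℝ)^k * ehat ηP (gb n k γ S)
            * ((if S ∈ β then phiY p true else 1) * p))|
        = ∏ S ∈ scopesOf n k γ, |(1/2:ℝ)^k * ehat ηP (gb n k γ S)
            * ((if S ∈ β then phiY p true else 1) * p)| := Finset.abs_prod _ _
    have hle : (∏ S ∈ scopesOf n k γ, |(1/2:ℝ)^k * ehat ηP (gb n k γ S)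
            * ((if S ∈ β then phiY p true else 1) * p)|)
        ≤ ∏ S ∈ scopesOf n k γ, (if S ∈ β then Real.sqrt (p * (1 - p)) else p) := by
      refine Finset.prod_le_prod (fun S _ => abs_nonneg _) fun S _ => ?_
      rw [abs_mul]
      have h2 : |(1/2:ℝ)^k * ehat ηP (gb n k γ S)| ≤ 1 := by
        rw [abs_mul, abs_of_pos (show (0:ℝ) < (1/2:ℝ)^k by positivity)]
        calc (1/2:ℝ)^k * |ehat ηP (gb n k γ S)| ≤ (1/2:ℝ)^k * 2^k :=
            mul_le_mul_of_nonneg_left (abs_ehat_le hη0 hηsum _) (by positivity)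
          _ = 1 := by rw [mul_comm]; exact two_halves_pow k
      have h3 : |(if S ∈ β then phiY p true else 1) * p|
          = (if S ∈ β then Real.sqrt (p * (1 - p)) else p) := by
        by_cases hSβ : S ∈ β
        · rw [if_pos hSβ, if_pos hSβ]
          have hphi : phiY p true = -Real.sqrt ((1 - p)/p) := by simp [phiY]
          rw [hphi, abs_mul, abs_neg, abs_of_nonneg (Real.sqrt_nonneg _),
            abs_of_pos hp0, mul_comm, sqrt_help1 hp0 hp1]
        · rw [if_neg hSβ, if_neg hSβ, one_mul, abs_of_pos hp0]
      have hb : (0:ℝ) ≤ (if S ∈ β then Real.sqrt (p * (1 - p)) else p) := by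
        by_cases hSβ : S ∈ β
        · rw [if_pos hSβ]; exact hq0
        · rw [if_neg hSβ]; exact hp0.le
      calc |(1/2:ℝ)^k * ehat ηP (gb n k γ S)|
            * |(if S ∈ β then phiY p true else 1) * p|
          ≤ 1 * (if S ∈ β then Real.sqrt (p * (1 - p)) else p) := by
            rw [h3]
            exact mul_le_mul_of_nonneg_right h2 hb
        _ = _ := one_mul _
    have hsplit : (∏ S ∈ scopesOf n k γ, (if S ∈ β then Real.sqrt (p * (1 - p)) else p))
        = Real.sqrt (p * (1 - p)) ^ (scopesOf n k γ ∩ β).card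
            * p ^ (scopesOf n k γ \ β).card := by
      rw [← Finset.prod_filter_mul_prod_filter_not (scopesOf n k γ) (· ∈ β)]
      congr 1
      · rw [show (∏ S ∈ (scopesOf n k γ).filter (· ∈ β),
            (if S ∈ β then Real.sqrt (p * (1 - p)) else p))
          = ∏ _S ∈ (scopesOf n k γ).filter (· ∈ β), Real.sqrt (p * (1 - p)) from
          Finset.prod_congr rfl fun S hS => if_pos (Finset.mem_filter.1 hS).2]
        rw [Finset.prod_const, Finset.filter_mem_eq_inter]
      · rw [show (∏ S ∈ (scopesOf n k γ).filter (fun S => ¬ S ∈ β),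
            (if S ∈ β then Real.sqrt (p * (1 - p)) else p))
          = ∏ _S ∈ (scopesOf n k γ).filter (fun S => ¬ S ∈ β), p from
          Finset.prod_congr rfl fun S hS => if_neg (Finset.mem_filter.1 hS).2]
        rw [Finset.prod_const,
          show (scopesOf n k γ).filter (fun S => ¬ S ∈ β) = scopesOf n k γ \ β from
            (Finset.sdiff_eq_filter _ _).symm]
    rw [habs, ← hsplit]
    exact hle
  · intro hneg
    by_cases c4 : Disjoint β U
    swap
    · obtain ⟨S, hSβ, hSU⟩ := Finset.not_disjoint_iff.1 c4
      exact hzero S (fun x => ES_U_zero x S hp0 hp1 hSU (Or.inl hSβ))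
    by_cases c5 : Disjoint (scopesOf n k γ) U
    swap
    · obtain ⟨S, hSγ, hSU⟩ := Finset.not_disjoint_iff.1 c5
      have hgb := Finset.nonempty_iff_ne_empty.1 (mem_scopesOf.1 hSγ)
      exact hzero S (fun x => ES_U_zero x S hp0 hp1 hSU (Or.inr hgb))
    by_cases c3 : β ⊆ scopesOf n k γ
    swap
    · obtain ⟨S, hSβ, hSγ⟩ := Finset.not_subset.1 c3
      have hgb : gb n k γ S = ∅ :=
        Finset.not_nonempty_iff_eq_empty.1 (fun hne => hSγ (mem_scopesOf.2 hne))
      have hSU : S ∉ U := Finset.disjoint_left.1 c4 hSβ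
      exact hzero S (fun x => ES_beta_zero x S hp0 hp1 hηsum hSU hSβ hgb)
    by_cases c2 : arityGE n k γ t
    swap
    · rw [arityGE] at c2
      push_neg at c2
      obtain ⟨S, hSγ, hlt⟩ := c2
      have hne := Finset.nonempty_iff_ne_empty.1 (mem_scopesOf.1 hSγ)
      have hcard : (gb n k γ S).card ≤ t - 1 := by
        have h := gb_card γ S
        omega
      exact hzero S (fun x => ES_small x S hp0 hp1 htk hη4 hne hcard)
    by_cases c1 : derives n k γ α
    · exact absurd ⟨c1, c2, c3, c4, c5⟩ hneg
    · rw [rep_good hp0 hp1 hηsum U J hpos α β γ c3 c5, if_neg c1, mul_zero]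

end RandomCSP
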